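/- Let p be a probability density on [0,1]^d that factorizes autoregressively as p(u_1,...,u_d) = p_1(u_1) · p_2(u_2 | u_1) ⋯ p_d(u_d | u_1,...,u_{d-1}), where p_1 is the density of the uniform distribution on [0,1]. If p is invariant under all permutations of its arguments, then every one-dimensional marginal of p is uniform on [0,1], i.e., p is the density of a valid copula. -/

import Mathlib

open MeasureTheory ProbabilityTheory Real Filter
open scoped ENNReal

lemma pi_restrict_eq {d : ℕ} (S : Fin d → Set ℝ) (hS : ∀ i, MeasurableSet (S i)) :
    (volume : Measure (Fin d → ℝ)).restrict (Set.univ.pi S)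
      = Measure.pi (fun i => (volume : Measure ℝ).restrict (S i)) := by
  symm
  apply Measure.pi_eq
  intro s hs
  rw [Measure.restrict_apply (MeasurableSet.univ_pi hs), ← Set.pi_inter_distrib,
    volume_pi_pi]
  exact Finset.prod_congr rfl fun i _ => (Measure.restrict_apply (hs i)).symm

lemma key_lintegral {d : ℕ} (hd : 0 < d) (q : Fin d → (Fin d → ℝ) → ℝ)
    (hq_meas : ∀ k, Measurable (q k)) (hq_nonneg : ∀ k u, 0 ≤ q k u)
    (hq_dep : ∀ k : Fin d, ∀ u v : Fin d → ℝ, (∀ j ≤ k, u j = v j) → q k u = q k v)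
    (hq_norm : ∀ k : Fin d, ∀ u : Fin d → ℝ,
      ∫ t in Set.Icc (0:ℝ) 1, q k (Function.update u k t) = 1)
    (hq0 : ∀ u : Fin d → ℝ, u ⟨0, hd⟩ ∈ Set.Icc (0:ℝ) 1 → q ⟨0, hd⟩ u = 1)
    (t : ℝ) (ht : t ∈ Set.Icc (0:ℝ) 1) :
    ∫⁻ u, ∏ k, ENNReal.ofReal (q k u)
      ∂(Measure.pi (fun i => (volume : Measure ℝ).restrict
          (if i = (⟨0, hd⟩ : Fin d) then Set.Icc 0 t else Set.Icc 0 1)))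
      = ENNReal.ofReal t := by
  classical
  set i0 : Fin d := ⟨0, hd⟩ with hi0
  set μ : Fin d → Measure ℝ :=
    fun i => (volume : Measure ℝ).restrict
      (if i = i0 then Set.Icc 0 t else Set.Icc 0 1) with hμ
  set f : (Fin d → ℝ) → ℝ≥0∞ := fun u => ∏ k, ENNReal.ofReal (q k u) with hf
  have hfm : Measurable f := by
    apply Finset.measurable_prod
    exact fun k _ => (hq_meas k).ennreal_ofReal
  -- the normalization in ℝ≥0∞ form, for coordinates k
  have hnorm' : ∀ (k : Fin d) (x : Fin d → ℝ),
      ∫⁻ s in Set.Icc (0:ℝ) 1, ENNReal.ofReal (q k (Function.update x k s)) = 1 := by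
    intro k x
    have hint : Integrable (fun s => q k (Function.update x k s))
        ((volume : Measure ℝ).restrict (Set.Icc 0 1)) := by
      by_contra h
      have := hq_norm k x
      rw [integral_undef h] at this
      exact one_ne_zero this.symm
    rw [← ofReal_integral_eq_lintegral_ofReal hint
      (ae_of_all _ fun s => hq_nonneg k _), hq_norm k x, ENNReal.ofReal_one]
  -- main downward induction
  have main : ∀ n m, m + n = d → 1 ≤ m → ∀ x : Fin d → ℝ,
      (∫⋯∫⁻_(Finset.univ.filter (fun i : Fin d => m ≤ i.val)), f ∂μ) x
        = ∏ k ∈ Finset.univ.filter (fun k : Fin d => k.val < m),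
            ENNReal.ofReal (q k x) := by
    intro n
    induction n with
    | zero =>
      intro m hm _ x
      have h1 : Finset.univ.filter (fun i : Fin d => m ≤ i.val) = ∅ := by
        apply Finset.filter_false_of_mem
        intro i _
        have := i.isLt
        omega
      have h2 : Finset.univ.filter (fun k : Fin d => k.val < m) = Finset.univ := by
        apply Finset.filter_true_of_mem
        intro i _
        have := i.isLt
        omega
      rw [h1, h2, lmarginal_empty, hf]
    | succ n ih =>
      intro m hm h1m x
      have hmd : m < d := by omega
      set i : Fin d := ⟨m, hmd⟩ with hi
      have hnotmem : i ∉ Finset.univ.filter (fun j : Fin d => m + 1 ≤ j.val) := by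
        simp [hi]
      have hins : Finset.univ.filter (fun j : Fin d => m ≤ j.val)
          = insert i (Finset.univ.filter (fun j : Fin d => m + 1 ≤ j.val)) := by
        ext j
        simp only [Finset.mem_filter, Finset.mem_univ, true_and, Finset.mem_insert,
          Fin.ext_iff, hi]
        omega
      have hnotmem' : i ∉ Finset.univ.filter (fun k : Fin d => k.val < m) := by
        simp [hi]
      have hsplit : Finset.univ.filter (fun k : Fin d => k.val < m + 1)
          = insert i (Finset.univ.filter (fun k : Fin d => k.val < m)) := by
        ext j
        simp only [Finset.mem_filter, Finset.mem_univ, true_and, Finset.mem_insert,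
          Fin.ext_iff, hi]
        omega
      have hqdep' : ∀ s : ℝ, ∀ k ∈ Finset.univ.filter (fun k : Fin d => k.val < m),
          ENNReal.ofReal (q k (Function.update x i s)) = ENNReal.ofReal (q k x) := by
        intro s k hk
        simp only [Finset.mem_filter, Finset.mem_univ, true_and] at hk
        congr 1
        apply hq_dep
        intro j hj
        apply Function.update_of_ne
        intro hji
        have hjk : (j : ℕ) ≤ (k : ℕ) := hj
        rw [hji] at hjk
        simp only [hi] at hjk
        omega
      have hμi : μ i = (volume : Measure ℝ).restrict (Set.Icc 0 1) := by
        rw [hμ]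
        simp only
        rw [if_neg]
        simp only [hi, Fin.ext_iff, hi0]
        omega
      rw [hins, lmarginal_insert _ hfm hnotmem]
      simp only [ih (m + 1) (by omega) (by omega)]
      simp only [hsplit, Finset.prod_insert hnotmem']
      calc ∫⁻ s, ENNReal.ofReal (q i (Function.update x i s))
              * ∏ k ∈ Finset.univ.filter (fun k : Fin d => k.val < m),
                  ENNReal.ofReal (q k (Function.update x i s)) ∂μ i
          = ∫⁻ s, ENNReal.ofReal (q i (Function.update x i s))
              * ∏ k ∈ Finset.univ.filter (fun k : Fin d => k.val < m),
                  ENNReal.ofReal (q k x) ∂μ i := by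
            apply lintegral_congr
            intro s
            rw [Finset.prod_congr rfl (hqdep' s)]
        _ = (∫⁻ s, ENNReal.ofReal (q i (Function.update x i s)) ∂μ i)
              * ∏ k ∈ Finset.univ.filter (fun k : Fin d => k.val < m),
                  ENNReal.ofReal (q k x) := by
            apply lintegral_mul_const
            exact (hq_meas i).comp (measurable_update x) |>.ennreal_ofReal
        _ = ∏ k ∈ Finset.univ.filter (fun k : Fin d => k.val < m),
                  ENNReal.ofReal (q k x) := by
            rw [hμi, hnorm' i x, one_mul]
  -- conclude
  have hx0 : (Finset.univ : Finset (Fin d))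
      = insert i0 (Finset.univ.filter (fun j : Fin d => 1 ≤ j.val)) := by
    ext j
    simp only [Finset.mem_univ, true_iff, Finset.mem_insert, Finset.mem_filter, true_and]
    rcases Nat.eq_zero_or_pos (j : ℕ) with h | h
    · exact Or.inl (Fin.ext (show (j : ℕ) = (i0 : ℕ) from h))
    · exact Or.inr h
  have hnotmem0 : i0 ∉ Finset.univ.filter (fun j : Fin d => 1 ≤ j.val) := by
    simp [hi0]
  have hsingle : Finset.univ.filter (fun k : Fin d => k.val < 1) = {i0} := by
    ext j
    simp only [Finset.mem_filter, Finset.mem_univ, true_and, Finset.mem_singleton,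
      Fin.ext_iff, hi0]
    omega
  have hμ0 : μ i0 = (volume : Measure ℝ).restrict (Set.Icc 0 t) := by
    simp [hμ]
  have e1 : lintegral (Measure.pi μ) f
      = (∫⋯∫⁻_Finset.univ, f ∂μ) (fun _ => (0:ℝ)) :=
    lintegral_eq_lmarginal_univ _
  rw [e1, hx0, lmarginal_insert _ hfm hnotmem0]
  simp only [main (d - 1) 1 (by omega) le_rfl]
  simp only [hsingle, Finset.prod_singleton, hμ0]
  have : ∀ᵐ s ∂(volume : Measure ℝ), s ∈ Set.Icc (0:ℝ) t →
      ENNReal.ofReal (q i0 (Function.update (fun _ => (0:ℝ)) i0 s)) = 1 := by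
    apply ae_of_all
    intro s hs
    rw [hq0]
    · simp
    · rw [Function.update_self]
      exact ⟨hs.1, hs.2.trans ht.2⟩
  rw [setLIntegral_congr_fun_ae measurableSet_Icc this, setLIntegral_one,
    Real.volume_Icc]
  norm_num

theorem attentional_copula_valid (d : ℕ) (hd : 0 < d)
    (p : (Fin d → ℝ) → ℝ) (q : Fin d → (Fin d → ℝ) → ℝ)
    (hq_meas : ∀ k, Measurable (q k)) (hq_nonneg : ∀ k u, 0 ≤ q k u)
    (hq_dep : ∀ k : Fin d, ∀ u v : Fin d → ℝ, (∀ j ≤ k, u j = v j) → q k u = q k v)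
    (hq_norm : ∀ k : Fin d, ∀ u : Fin d → ℝ,
      ∫ t in Set.Icc (0:ℝ) 1, q k (Function.update u k t) = 1)
    (hq0 : ∀ u : Fin d → ℝ, u ⟨0, hd⟩ ∈ Set.Icc (0:ℝ) 1 → q ⟨0, hd⟩ u = 1)
    (hp : ∀ u, p u = ∏ k, q k u)
    (hinv : ∀ σ : Equiv.Perm (Fin d), ∀ u : Fin d → ℝ, p (u ∘ σ) = p u) :
    ∀ k : Fin d, ∀ t ∈ Set.Icc (0:ℝ) 1,
      ∫ u in {u : Fin d → ℝ | u k ≤ t} ∩ Set.univ.pi (fun _ => Set.Icc (0:ℝ) 1),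
        p u = t := by
  classical
  intro k t ht
  set i0 : Fin d := ⟨0, hd⟩ with hi0
  set Sk : Fin d → Set ℝ := fun i => if i = k then Set.Icc 0 t else Set.Icc 0 1 with hSk
  -- the domain of integration is a box
  have hset : {u : Fin d → ℝ | u k ≤ t} ∩ Set.univ.pi (fun _ => Set.Icc (0:ℝ) 1)
      = Set.univ.pi Sk := by
    ext u
    constructor
    · rintro ⟨h1, h2⟩ i _
      simp only [hSk]
      by_cases hik : i = k
      · rw [if_pos hik, hik]
        exact ⟨(h2 k (Set.mem_univ k)).1, h1⟩
      · rw [if_neg hik]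
        exact h2 i (Set.mem_univ i)
    · intro h
      constructor
      · have := h k (Set.mem_univ k)
        simp only [hSk, if_pos rfl] at this
        exact this.2
      · intro i _
        have := h i (Set.mem_univ i)
        simp only [hSk] at this
        by_cases hik : i = k
        · rw [if_pos hik] at this
          exact ⟨this.1, this.2.trans ht.2⟩
        · rw [if_neg hik] at this
          exact this
  have hSkm : ∀ i, MeasurableSet (Sk i) := by
    intro i
    by_cases h : i = k
    · rw [hSk]; simp only; rw [if_pos h]; exact measurableSet_Icc
    · rw [hSk]; simp only; rw [if_neg h]; exact measurableSet_Icc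
  have hpm : Measurable p := by
    have : p = fun u => ∏ j, q j u := funext hp
    rw [this]
    exact Finset.measurable_prod _ fun j _ => hq_meas j
  -- swap coordinates 0 and k
  set σ : Equiv.Perm (Fin d) := Equiv.swap i0 k with hσ
  have hcomp : ∀ i, Sk (σ i) = (if i = i0 then Set.Icc (0:ℝ) t else Set.Icc (0:ℝ) 1) := by
    intro i
    by_cases h : i = i0
    · rw [if_pos h, h, hSk]
      simp only
      rw [hσ, Equiv.swap_apply_left, if_pos rfl]
    · rw [if_neg h, hSk]
      simp only
      rw [if_neg]
      intro hσi
      apply h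
      have : i = σ.symm k := by rw [← hσi, Equiv.symm_apply_apply]
      rw [hσ, Equiv.symm_swap, Equiv.swap_apply_right] at this
      exact this
  set T : (Fin d → ℝ) ≃ᵐ (Fin d → ℝ) := MeasurableEquiv.piCongrLeft (fun _ => ℝ) σ with hT
  have hTapp : ∀ (u : Fin d → ℝ), T u = u ∘ ⇑σ.symm := by
    intro u
    funext i
    rw [hT, MeasurableEquiv.coe_piCongrLeft]
    have h2 := Equiv.piCongrLeft_apply_apply (P := fun _ : Fin d => ℝ) (e := σ) u (σ.symm i)
    rw [Equiv.apply_symm_apply] at h2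
    exact h2
  have hMP : MeasurePreserving T
      (Measure.pi fun i => (volume : Measure ℝ).restrict
        (if i = i0 then Set.Icc 0 t else Set.Icc 0 1))
      (Measure.pi fun i => (volume : Measure ℝ).restrict (Sk i)) := by
    have hmeq : (Measure.pi fun i' => (volume : Measure ℝ).restrict (Sk (σ i')))
        = Measure.pi fun i => (volume : Measure ℝ).restrict
            (if i = i0 then Set.Icc 0 t else Set.Icc 0 1) := by
      congr 1
      funext i
      rw [hcomp i]
    have h3 := measurePreserving_piCongrLeft
      (fun i => (volume : Measure ℝ).restrict (Sk i)) σ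
    rw [← hT, hmeq] at h3
    exact h3
  rw [hset, show (volume : Measure (Fin d → ℝ)).restrict (Set.univ.pi Sk)
      = Measure.pi (fun i => (volume : Measure ℝ).restrict (Sk i)) from
      pi_restrict_eq Sk hSkm]
  rw [← hMP.integral_comp' p]
  have hpT : ∀ u, p (T u) = p u := by
    intro u
    rw [hTapp u]
    exact hinv σ.symm u
  simp only [hpT]
  -- now compute the integral against the product measure concentrated at coordinate 0
  have hnn : 0 ≤ᵐ[Measure.pi fun i => (volume : Measure ℝ).restrict
      (if i = i0 then Set.Icc 0 t else Set.Icc 0 1)] p :=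
    ae_of_all _ fun u => by
      rw [hp]
      exact Finset.prod_nonneg fun j _ => hq_nonneg j u
  rw [integral_eq_lintegral_of_nonneg_ae hnn hpm.aestronglyMeasurable]
  have hl : ∫⁻ u, ENNReal.ofReal (p u)
      ∂(Measure.pi fun i => (volume : Measure ℝ).restrict
        (if i = i0 then Set.Icc 0 t else Set.Icc 0 1)) = ENNReal.ofReal t := by
    rw [show (fun u => ENNReal.ofReal (p u))
        = fun u => ∏ j, ENNReal.ofReal (q j u) from funext fun u => by
      rw [hp]
      exact ENNReal.ofReal_prod_of_nonneg fun j _ => hq_nonneg j u]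
    exact key_lintegral hd q hq_meas hq_nonneg hq_dep hq_norm hq0 t ht
  rw [hl, ENNReal.toReal_ofReal ht.1]
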